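/- Let R₀ = ℝ⟦X,Y⟧ be the formal power series ring in two variables over ℝ and let k ≥ 2 be an integer. Suppose l, n ∈ R₀ both have zero constant coefficient and l·n = Y·(X² + Y^{2k−2}). Let l̂, n̂ denote their images in R = ℂ⟦X,Y⟧ under the coefficient-wise inclusion ℝ → ℂ. Then the quotient ℂ-vector space R / Ideal.span {l̂, n̂} has dimension 2. -/

import Mathlib

open MvPowerSeries

open Finsupp


variable {R : Type*} [CommRing R]

noncomputable def ee (i j : ℕ) : Fin 2 →₀ ℕ := Finsupp.single 0 i + Finsupp.single 1 j

@[simp] lemma ee_apply0 (i j : ℕ) : ee i j 0 = i := by simp [ee, Finsupp.single_apply]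
@[simp] lemma ee_apply1 (i j : ℕ) : ee i j 1 = j := by simp [ee, Finsupp.single_apply]

lemma eq_ee (d : Fin 2 →₀ ℕ) : d = ee (d 0) (d 1) := by
  ext a; fin_cases a <;> simp

lemma ee_inj {i j i' j' : ℕ} : ee i j = ee i' j' ↔ i = i' ∧ j = j' := by
  constructor
  · intro h
    exact ⟨by simpa using congrArg (fun d => d 0) h, by simpa using congrArg (fun d => d 1) h⟩
  · rintro ⟨rfl, rfl⟩; rfl

lemma ee_add (a b a' b' : ℕ) : ee a b + ee a' b' = ee (a+a') (b+b') := by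
  ext x; fin_cases x <;> simp

/-- Workhorse: coefficient of a product at `ee i j`. -/
lemma coeff_ee_mul (f g : MvPowerSeries (Fin 2) R) (i j : ℕ) :
    coeff (ee i j) (f * g) =
      ∑ a ∈ Finset.range (i+1), ∑ b ∈ Finset.range (j+1),
        coeff (ee a b) f * coeff (ee (i-a) (j-b)) g := by
  rw [MvPowerSeries.coeff_mul, ← Finset.sum_product']
  refine Finset.sum_nbij' (fun p => (p.1 0, p.1 1))
    (fun q => (ee q.1 q.2, ee (i - q.1) (j - q.2))) ?_ ?_ ?_ ?_ ?_
  · intro p hp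
    rw [Finset.HasAntidiagonal.mem_antidiagonal] at hp
    have h0 : p.1 0 + p.2 0 = i := by simpa using congrArg (fun d => d 0) hp
    have h1 : p.1 1 + p.2 1 = j := by simpa using congrArg (fun d => d 1) hp
    simp only [Finset.mem_product, Finset.mem_range]
    omega
  · intro q hq
    simp only [Finset.mem_product, Finset.mem_range] at hq
    rw [Finset.HasAntidiagonal.mem_antidiagonal, ee_add]
    exact ee_inj.2 ⟨by omega, by omega⟩
  · intro p hp
    rw [Finset.HasAntidiagonal.mem_antidiagonal] at hp
    have h0 : p.1 0 + p.2 0 = i := by simpa using congrArg (fun d => d 0) hp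
    have h1 : p.1 1 + p.2 1 = j := by simpa using congrArg (fun d => d 1) hp
    have e1 : ee (i - p.1 0) (j - p.1 1) = p.2 := by
      conv_rhs => rw [eq_ee p.2]
      exact ee_inj.2 ⟨by omega, by omega⟩
    show (ee (p.1 0) (p.1 1), ee (i - p.1 0) (j - p.1 1)) = p
    exact Prod.ext (eq_ee p.1).symm e1
  · intro q hq
    simp
  · intro p hp
    rw [Finset.HasAntidiagonal.mem_antidiagonal] at hp
    have h0 : p.1 0 + p.2 0 = i := by simpa using congrArg (fun d => d 0) hp
    have h1 : p.1 1 + p.2 1 = j := by simpa using congrArg (fun d => d 1) hp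
    have e1 : ee (i - p.1 0) (j - p.1 1) = p.2 := by
      conv_rhs => rw [eq_ee p.2]
      exact ee_inj.2 ⟨by omega, by omega⟩
    show _ = coeff (ee (p.1 0) (p.1 1)) f * coeff (ee (i - p.1 0) (j - p.1 1)) g
    rw [← eq_ee p.1, e1]

/-- Slice by `X 0`-degree `i`: a power series in the second variable. -/
noncomputable def sl (i : ℕ) (f : MvPowerSeries (Fin 2) R) : PowerSeries R :=
  PowerSeries.mk fun j => coeff (ee i j) f

@[simp] lemma coeff_sl (i j : ℕ) (f : MvPowerSeries (Fin 2) R) :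
    PowerSeries.coeff j (sl i f) = coeff (ee i j) f := by
  simp [sl]

/-- Slice by `X 1`-degree `0`: a power series recording coefficients `(i, 0)`. -/
noncomputable def sw (f : MvPowerSeries (Fin 2) R) : PowerSeries R :=
  PowerSeries.mk fun i => coeff (ee i 0) f

@[simp] lemma coeff_sw (i : ℕ) (f : MvPowerSeries (Fin 2) R) :
    PowerSeries.coeff i (sw f) = coeff (ee i 0) f := by
  simp [sw]

lemma sw_mul (f g : MvPowerSeries (Fin 2) R) : sw (f * g) = sw f * sw g := by
  ext i
  rw [coeff_sw, PowerSeries.coeff_mul, coeff_ee_mul,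
    Finset.Nat.sum_antidiagonal_eq_sum_range_succ_mk]
  refine Finset.sum_congr rfl fun a _ => ?_
  simp

lemma sl0_mul (f g : MvPowerSeries (Fin 2) R) : sl 0 (f * g) = sl 0 f * sl 0 g := by
  ext j
  rw [coeff_sl, PowerSeries.coeff_mul, coeff_ee_mul,
    Finset.Nat.sum_antidiagonal_eq_sum_range_succ_mk]
  rw [Finset.sum_range_one]
  refine Finset.sum_congr rfl fun b _ => ?_
  simp

lemma sl1_mul (f g : MvPowerSeries (Fin 2) R) :
    sl 1 (f * g) = sl 0 f * sl 1 g + sl 1 f * sl 0 g := by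
  ext j
  rw [coeff_sl, map_add, PowerSeries.coeff_mul, PowerSeries.coeff_mul,
    coeff_ee_mul, Finset.Nat.sum_antidiagonal_eq_sum_range_succ_mk,
    Finset.Nat.sum_antidiagonal_eq_sum_range_succ_mk]
  rw [Finset.sum_range_succ, Finset.sum_range_one]
  congr 1 <;> refine Finset.sum_congr rfl fun b _ => ?_ <;> simp

lemma sl2_mul (f g : MvPowerSeries (Fin 2) R) :
    sl 2 (f * g) = sl 0 f * sl 2 g + sl 1 f * sl 1 g + sl 2 f * sl 0 g := by
  ext j
  rw [coeff_sl, map_add, map_add, PowerSeries.coeff_mul, PowerSeries.coeff_mul,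
    PowerSeries.coeff_mul, coeff_ee_mul, Finset.Nat.sum_antidiagonal_eq_sum_range_succ_mk,
    Finset.Nat.sum_antidiagonal_eq_sum_range_succ_mk,
    Finset.Nat.sum_antidiagonal_eq_sum_range_succ_mk]
  rw [Finset.sum_range_succ, Finset.sum_range_succ, Finset.sum_range_one]
  congr 1
  · congr 1 <;> refine Finset.sum_congr rfl fun b _ => ?_ <;> simp
  · refine Finset.sum_congr rfl fun b _ => ?_; simp

@[simp] lemma constantCoeff_sl0 (f : MvPowerSeries (Fin 2) R) :
    PowerSeries.constantCoeff (sl 0 f) = constantCoeff f := by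
  have h0 : ee 0 0 = 0 := by ext a; fin_cases a <;> simp
  rw [← PowerSeries.coeff_zero_eq_constantCoeff, coeff_sl, h0,
    MvPowerSeries.coeff_zero_eq_constantCoeff]

lemma ee_eq_single0 (i : ℕ) : Finsupp.single 0 i = ee i 0 := by
  ext a; fin_cases a <;> simp [Finsupp.single_apply]

lemma ee_eq_single1 (j : ℕ) : Finsupp.single 1 j = ee 0 j := by
  ext a; fin_cases a <;> simp [Finsupp.single_apply]

lemma coeff_Q (m i j : ℕ) :
    coeff (ee i j) ((X 0 : MvPowerSeries (Fin 2) R) ^ 2 + X 1 ^ m) =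
      (if i = 2 ∧ j = 0 then 1 else 0) + (if i = 0 ∧ j = m then 1 else 0) := by
  rw [map_add, MvPowerSeries.coeff_X_pow, MvPowerSeries.coeff_X_pow,
    ee_eq_single0, ee_eq_single1]
  congr 1
  · simp only [eq_iff_iff, ee_inj]
  · simp only [eq_iff_iff, ee_inj]

lemma sl0_Q (m : ℕ) :
    sl 0 ((X 0 : MvPowerSeries (Fin 2) R) ^ 2 + X 1 ^ m) = PowerSeries.X ^ m := by
  ext j
  rw [coeff_sl, coeff_Q, PowerSeries.coeff_X_pow]
  by_cases h : j = m <;> simp [h]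

lemma sl1_Q (m : ℕ) :
    sl 1 ((X 0 : MvPowerSeries (Fin 2) R) ^ 2 + X 1 ^ m) = 0 := by
  ext j
  rw [coeff_sl, coeff_Q]
  simp

lemma sl2_Q (m : ℕ) :
    sl 2 ((X 0 : MvPowerSeries (Fin 2) R) ^ 2 + X 1 ^ m) = 1 := by
  ext j
  rw [coeff_sl, coeff_Q, PowerSeries.coeff_one]
  by_cases h : j = 0 <;> simp [h]

/-- Leading coefficient of a product of power series over a domain. -/
lemma lead_mul {K : Type*} [Field K] {f g : PowerSeries K} {s t : ℕ}
    (hf : f.order = s) (hg : g.order = t) :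
    PowerSeries.coeff (s + t) (f * g) = PowerSeries.coeff s f * PowerSeries.coeff t g := by
  rw [PowerSeries.coeff_mul]
  refine Finset.sum_eq_single (s, t) ?_ ?_
  · rintro ⟨a, b⟩ hab hne
    rw [Finset.HasAntidiagonal.mem_antidiagonal] at hab
    rcases lt_trichotomy a s with h | h | h
    · rw [PowerSeries.coeff_of_lt_order a (by rw [hf]; exact_mod_cast h), zero_mul]
    · exact absurd (Prod.ext h (by omega)) hne
    · rw [PowerSeries.coeff_of_lt_order b (by rw [hg]; exact_mod_cast (by omega : b < t)),
        mul_zero]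
  · intro h
    simp [Finset.mem_antidiagonal] at h

/-- Key irreducibility-type lemma: `X₀² + X₁^m` is not a product of two
non-units in `ℝ⟦X₀,X₁⟧`. -/
lemma key (m : ℕ) (u v : MvPowerSeries (Fin 2) ℝ)
    (hu : constantCoeff u = 0) (hv : constantCoeff v = 0)
    (huv : u * v = X 0 ^ 2 + X 1 ^ m) : False := by
  have e1 : sl 0 u * sl 0 v = (PowerSeries.X : PowerSeries ℝ) ^ m := by
    rw [← sl0_mul, huv, sl0_Q]
  have e2 : sl 0 u * sl 1 v + sl 1 u * sl 0 v = 0 := by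
    rw [← sl1_mul, huv, sl1_Q]
  have e3 : sl 0 u * sl 2 v + sl 1 u * sl 1 v + sl 2 u * sl 0 v = 1 := by
    rw [← sl2_mul, huv, sl2_Q]
  set p := PowerSeries.constantCoeff (sl 1 u) with hp
  set r := PowerSeries.constantCoeff (sl 1 v) with hr
  have hpr : p * r = 1 := by
    have h := congrArg (PowerSeries.constantCoeff) e3
    rw [map_add, map_add, map_mul, map_mul, map_mul, constantCoeff_sl0, constantCoeff_sl0,
      hu, hv, zero_mul, mul_zero, zero_add, add_zero, map_one] at h
    exact h
  have hpne : p ≠ 0 := left_ne_zero_of_mul_eq_one hpr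
  have hrne : r ≠ 0 := right_ne_zero_of_mul_eq_one hpr
  have hUne : sl 0 u ≠ 0 := by
    intro h
    rw [h, zero_mul] at e1
    exact (pow_ne_zero m PowerSeries.X_ne_zero) e1.symm
  have hVne : sl 0 v ≠ 0 := by
    intro h
    rw [h, mul_zero] at e1
    exact (pow_ne_zero m PowerSeries.X_ne_zero) e1.symm
  have hU' : (sl 0 u).order ≠ ⊤ := (PowerSeries.order_finite_iff_ne_zero.2 hUne).ne
  have hV' : (sl 0 v).order ≠ ⊤ := (PowerSeries.order_finite_iff_ne_zero.2 hVne).ne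
  obtain ⟨s, hs⟩ : ∃ s : ℕ, (sl 0 u).order = (s : ℕ∞) := by
    lift (sl 0 u).order to ℕ using hU' with s hs
    exact ⟨s, rfl⟩
  obtain ⟨t, ht⟩ : ∃ t : ℕ, (sl 0 v).order = (t : ℕ∞) := by
    lift (sl 0 v).order to ℕ using hV' with t ht
    exact ⟨t, rfl⟩
  have hC0 : (sl 1 u).order = (0 : ℕ) := by
    rw [PowerSeries.order_eq_nat]
    exact ⟨by rwa [PowerSeries.coeff_zero_eq_constantCoeff], by omega⟩
  have hD0 : (sl 1 v).order = (0 : ℕ) := by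
    rw [PowerSeries.order_eq_nat]
    exact ⟨by rwa [PowerSeries.coeff_zero_eq_constantCoeff], by omega⟩
  have hstm : s + t = m := by
    have ho : (sl 0 u).order + (sl 0 v).order = (m : ℕ∞) := by
      rw [← PowerSeries.order_mul, e1, PowerSeries.order_X_pow]
    rw [hs, ht] at ho
    exact_mod_cast ho
  set α := PowerSeries.coeff s (sl 0 u) with hα
  set β := PowerSeries.coeff t (sl 0 v) with hβ
  have hαβ : α * β = 1 := by
    have h := lead_mul hs ht
    rw [e1, PowerSeries.coeff_X_pow, if_pos hstm] at h
    exact h.symm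
  have e2' : sl 0 u * sl 1 v = (-1 : PowerSeries ℝ) * (sl 1 u * sl 0 v) := by
    linear_combination e2
  have hst : s = t := by
    have h1 : (sl 0 u * sl 1 v).order = (s : ℕ∞) := by
      rw [PowerSeries.order_mul, hs, hD0]
      simp
    have h2 : ((-1 : PowerSeries ℝ) * (sl 1 u * sl 0 v)).order = (t : ℕ∞) := by
      rw [PowerSeries.order_mul, PowerSeries.order_mul, hC0, ht,
        PowerSeries.order_zero_of_unit (isUnit_one : IsUnit (1 : PowerSeries ℝ)).neg]
      simp
    rw [e2', h2] at h1
    exact_mod_cast h1.symm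
  have hA : PowerSeries.coeff s (sl 0 u * sl 1 v) = α * r := by
    have h := lead_mul hs hD0
    rw [add_zero, PowerSeries.coeff_zero_eq_constantCoeff] at h
    exact h
  have hB : PowerSeries.coeff s (sl 1 u * sl 0 v) = p * β := by
    rw [hst]
    have h := lead_mul hC0 ht
    rw [zero_add, PowerSeries.coeff_zero_eq_constantCoeff] at h
    exact h
  have key2 : α * r + p * β = 0 := by
    have h := congrArg (PowerSeries.coeff s) e2
    rwa [map_add, map_zero, hA, hB] at h
  have h5 : α * r = -(p * β) := by linarith
  have hfinal : (α * r) * (α * r) = -1 := by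
    have h6 : (α * r) * (α * r) = (α * r) * (-(p * β)) := by rw [← h5]
    have h7 : (α * r) * (-(p * β)) = -((p * r) * (α * β)) := by ring
    rw [h6, h7, hpr, hαβ]
    norm_num
  linarith [mul_self_nonneg (α * r)]

lemma ee00 : ee 0 0 = (0 : Fin 2 →₀ ℕ) := by ext a; fin_cases a <;> simp

lemma coeff_ee10_mul (f g : MvPowerSeries (Fin 2) R) :
    coeff (ee 1 0) (f * g) =
      constantCoeff f * coeff (ee 1 0) g +
        coeff (ee 1 0) f * constantCoeff g := by
  rw [coeff_ee_mul, Finset.sum_range_succ, Finset.sum_range_one, Finset.sum_range_one,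
    Finset.sum_range_one]
  norm_num [ee00, MvPowerSeries.coeff_zero_eq_constantCoeff_apply]

/-- The evaluation `f ↦ f(ε, 0)` into the dual numbers. -/
noncomputable def psi : MvPowerSeries (Fin 2) ℂ →ₐ[ℂ] DualNumber ℂ where
  toFun f := ⟨constantCoeff f, coeff (ee 1 0) f⟩
  map_one' := by
    refine TrivSqZeroExt.ext (by simp) ?_
    show coeff (ee 1 0) 1 = 0
    rw [MvPowerSeries.coeff_one, if_neg]
    · intro h
      have := congrArg (fun d => d 0) h
      simp at this
  map_mul' f g := by
    refine TrivSqZeroExt.ext ?_ ?_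
    · show constantCoeff (f * g) = _
      erw [TrivSqZeroExt.fst_mul, map_mul]
      rfl
    · show coeff (ee 1 0) (f * g) = _
      erw [TrivSqZeroExt.snd_mul, coeff_ee10_mul]
      simp [smul_eq_mul, mul_comm]
  map_zero' := by
    refine TrivSqZeroExt.ext (by simp) (by simp)
  map_add' f g := by
    refine TrivSqZeroExt.ext ?_ ?_
    · show constantCoeff (f + g) = _
      erw [TrivSqZeroExt.fst_add]; simp
    · show coeff (ee 1 0) (f + g) = _
      erw [TrivSqZeroExt.snd_add]; simp
  commutes' c := by
    rw [TrivSqZeroExt.algebraMap_eq_inl]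
    refine TrivSqZeroExt.ext ?_ ?_
    · show constantCoeff (algebraMap ℂ _ c) = c
      simp [MvPowerSeries.algebraMap_apply]
    · show coeff (ee 1 0) (algebraMap ℂ _ c) = 0
      rw [MvPowerSeries.algebraMap_apply, Algebra.algebraMap_self_apply, MvPowerSeries.coeff_C, if_neg]
      intro h
      have := congrArg (fun d => d 0) h
      simp at this

lemma coeff_apply' {S : Type*} [CommRing S] (f : MvPowerSeries (Fin 2) S) (d : Fin 2 →₀ ℕ) :
    MvPowerSeries.coeff d f = f d := rfl

lemma ee10_ne_zero : ee 1 0 ≠ (0 : Fin 2 →₀ ℕ) := by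
  intro h
  have := congrArg (fun d => d 0) h
  simp at this

lemma psi_surjective : Function.Surjective psi := by
  intro z
  refine ⟨MvPowerSeries.C z.fst + MvPowerSeries.C z.snd * X 0, ?_⟩
  refine TrivSqZeroExt.ext ?_ ?_
  · show constantCoeff _ = z.fst
    rw [map_add, map_mul, MvPowerSeries.constantCoeff_C, MvPowerSeries.constantCoeff_C,
      MvPowerSeries.constantCoeff_X, mul_zero, add_zero]
  · show coeff (ee 1 0) _ = z.snd
    rw [map_add, MvPowerSeries.coeff_C, if_neg ee10_ne_zero, MvPowerSeries.coeff_C_mul,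
      MvPowerSeries.coeff_X, if_pos (ee_eq_single0 1).symm, mul_one, zero_add]

lemma ker_psi : RingHom.ker psi = Ideal.span {(X 1 : MvPowerSeries (Fin 2) ℂ), X 0 ^ 2} := by
  apply le_antisymm
  · intro f hf
    rw [RingHom.mem_ker] at hf
    have h0 : constantCoeff f = 0 := congrArg TrivSqZeroExt.fst hf
    have h1 : coeff (ee 1 0) f = 0 := congrArg TrivSqZeroExt.snd hf
    obtain ⟨g₁, hg₁⟩ : ∃ g₁ : MvPowerSeries (Fin 2) ℂ,
        ∀ d, coeff d g₁ = coeff (d + Finsupp.single 1 1) f :=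
      ⟨fun e => coeff (e + Finsupp.single 1 1) f, fun d => by rw [coeff_apply']; rfl⟩
    obtain ⟨h₁, hh₁⟩ : ∃ h₁ : MvPowerSeries (Fin 2) ℂ,
        ∀ d, coeff d h₁ =
          if d 1 = 0 then coeff (d + Finsupp.single 0 2) f else 0 :=
      ⟨fun e => if e 1 = 0 then coeff (e + Finsupp.single 0 2) f else 0,
        fun d => by rw [coeff_apply']; rfl⟩
    rw [Ideal.mem_span_pair]
    refine ⟨g₁, h₁, ?_⟩
    ext d
    rw [map_add, mul_comm g₁, mul_comm h₁, MvPowerSeries.X, MvPowerSeries.X_pow_eq,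
      MvPowerSeries.coeff_monomial_mul, MvPowerSeries.coeff_monomial_mul]
    by_cases hd1 : d 1 = 0
    · rw [if_neg (by rw [Finsupp.single_le_iff]; omega), zero_add]
      by_cases hd0 : 2 ≤ d 0
      · rw [if_pos (by rw [Finsupp.single_le_iff]; omega), one_mul, hh₁,
          if_pos (by rw [Finsupp.tsub_apply]; simp [Finsupp.single_apply, hd1]),
          tsub_add_cancel_of_le (by rw [Finsupp.single_le_iff]; omega)]
      · rw [if_neg (by rw [Finsupp.single_le_iff]; omega)]
        have hd0' : d 0 = 0 ∨ d 0 = 1 := by omega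
        rcases hd0' with hdd | hdd
        · have hd : d = 0 := by
            ext a; fin_cases a <;> simp [hdd, hd1]
          rw [hd, MvPowerSeries.coeff_zero_eq_constantCoeff_apply, h0]
        · have hd : d = ee 1 0 := by
            ext a; fin_cases a <;> simp [hdd, hd1]
          rw [hd, h1]
    · rw [if_pos (by rw [Finsupp.single_le_iff]; omega), one_mul, hg₁,
        tsub_add_cancel_of_le (by rw [Finsupp.single_le_iff]; omega)]
      have hzero : (if Finsupp.single 0 2 ≤ d then
          1 * coeff (d - Finsupp.single 0 2) h₁ else 0) = 0 := by
        by_cases hle : Finsupp.single 0 2 ≤ d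
        · rw [if_pos hle, one_mul, hh₁,
            if_neg (by rw [Finsupp.tsub_apply]; simp [Finsupp.single_apply, hd1])]
        · rw [if_neg hle]
      rw [hzero, add_zero]
  · rw [Ideal.span_le]
    rintro x (rfl | rfl)
    · rw [SetLike.mem_coe, RingHom.mem_ker]
      refine TrivSqZeroExt.ext ?_ ?_
      · show constantCoeff (X 1) = 0
        exact MvPowerSeries.constantCoeff_X 1
      · show coeff (ee 1 0) (X 1) = 0
        rw [MvPowerSeries.coeff_X, if_neg]
        intro h
        have := congrArg (fun d => d 0) h
        simp [Finsupp.single_apply] at this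
    · rw [SetLike.mem_coe, RingHom.mem_ker, map_pow]
      have hX0 : psi (X 0) = ⟨0, 1⟩ := by
        refine TrivSqZeroExt.ext ?_ ?_
        · exact MvPowerSeries.constantCoeff_X 0
        · show coeff (ee 1 0) (X 0) = 1
          rw [MvPowerSeries.coeff_X, if_pos (ee_eq_single0 1).symm]
      rw [hX0]
      refine TrivSqZeroExt.ext ?_ ?_
      · erw [pow_two, TrivSqZeroExt.fst_mul]; simp
      · erw [pow_two, TrivSqZeroExt.snd_mul]; simp

noncomputable def dualEquivProd : DualNumber ℂ ≃ₗ[ℂ] ℂ × ℂ where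
  toFun x := (x.fst, x.snd)
  invFun p := ⟨p.1, p.2⟩
  map_add' x y := by simp [TrivSqZeroExt.fst_add, TrivSqZeroExt.snd_add, Prod.ext_iff]
  map_smul' c x := by simp [Prod.ext_iff]
  left_inv x := rfl
  right_inv p := rfl

lemma dim2 : Module.finrank ℂ
    (MvPowerSeries (Fin 2) ℂ ⧸ Ideal.span {(X 1 : MvPowerSeries (Fin 2) ℂ), X 0 ^ 2}) = 2 := by
  have e₁ := Ideal.quotientEquivAlgOfEq ℂ ker_psi.symm
  have e₂ := Ideal.quotientKerAlgEquivOfSurjective psi_surjective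
  rw [(e₁.trans e₂).toLinearEquiv.finrank_eq, dualEquivProd.finrank_eq,
    Module.finrank_prod, Module.finrank_self]

lemma sw_X1_mul (w : MvPowerSeries (Fin 2) R) : sw ((X 1 : MvPowerSeries (Fin 2) R) * w) = 0 := by
  ext i
  rw [coeff_sw, MvPowerSeries.X, MvPowerSeries.coeff_monomial_mul,
    if_neg (by rw [Finsupp.single_le_iff]; simp)]
  simp

lemma X1_dvd_of_sw_eq_zero (f : MvPowerSeries (Fin 2) R) (h : sw f = 0) :
    (X 1 : MvPowerSeries (Fin 2) R) ∣ f := by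
  rw [MvPowerSeries.X_dvd_iff]
  intro d hd
  have h2 := congrArg (PowerSeries.coeff (d 0)) h
  rw [coeff_sw, LinearMap.map_zero] at h2
  have hdeq : d = ee (d 0) 0 := by ext a; fin_cases a <;> simp [hd]
  rw [hdeq]
  exact h2

lemma main_aux (k : ℕ) (hk : 2 ≤ k) (l n : MvPowerSeries (Fin 2) ℝ)
    (hn : constantCoeff n = 0)
    (hln : l * n = X 1 * ((X 0) ^ 2 + (X 1) ^ (2 * k - 2)))
    (hdvd : (X 1 : MvPowerSeries (Fin 2) ℝ) ∣ l) :
    Ideal.span {MvPowerSeries.map (algebraMap ℝ ℂ) l,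
      MvPowerSeries.map (algebraMap ℝ ℂ) n} =
    Ideal.span {(X 1 : MvPowerSeries (Fin 2) ℂ), X 0 ^ 2} := by
  obtain ⟨l₁, rfl⟩ := hdvd
  set m := 2 * k - 2 with hmdef
  have hm : 1 ≤ m := by omega
  have hX1 : (X 1 : MvPowerSeries (Fin 2) ℝ) ≠ 0 := by
    intro h
    have h2 := congrArg (coeff (Finsupp.single 1 1)) h
    rw [MvPowerSeries.coeff_X, if_pos rfl, map_zero] at h2
    exact one_ne_zero h2
  have hcore : l₁ * n = X 0 ^ 2 + X 1 ^ m := by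
    apply mul_left_cancel₀ hX1
    rw [← hln]; ring
  have hconst : constantCoeff l₁ ≠ 0 := fun h => key m l₁ n h hn hcore
  have hunit : IsUnit l₁ :=
    MvPowerSeries.isUnit_iff_constantCoeff.2 (isUnit_iff_ne_zero.2 hconst)
  obtain ⟨w, hw⟩ := hunit.exists_right_inv
  set φ := MvPowerSeries.map (algebraMap ℝ ℂ) with hφdef
  have hφl : φ (X 1 * l₁) = X 1 * φ l₁ := by rw [map_mul, MvPowerSeries.map_X]
  have hφw : φ l₁ * φ w = 1 := by rw [← map_mul, hw, map_one]
  have hφcore : φ l₁ * φ n = X 0 ^ 2 + X 1 ^ m := by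
    rw [← map_mul, hcore, map_add, map_pow, map_pow, MvPowerSeries.map_X, MvPowerSeries.map_X]
  have hXm : (X 1 : MvPowerSeries (Fin 2) ℂ) ^ m = X 1 ^ (m - 1) * X 1 := by
    rw [← pow_succ]
    congr 1
    omega
  apply le_antisymm
  · rw [Ideal.span_le]
    rintro x hx
    simp only [Set.mem_insert_iff, Set.mem_singleton_iff] at hx
    rcases hx with rfl | rfl
    · rw [SetLike.mem_coe]
      refine Ideal.mem_span_pair.2 ⟨φ l₁, 0, ?_⟩
      rw [hφl]; ring
    · rw [SetLike.mem_coe]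
      refine Ideal.mem_span_pair.2 ⟨φ w * X 1 ^ (m - 1), φ w, ?_⟩
      linear_combination (-(φ w)) * hφcore + φ n * hφw - φ w * hXm
  · rw [Ideal.span_le]
    rintro x hx
    simp only [Set.mem_insert_iff, Set.mem_singleton_iff] at hx
    rcases hx with rfl | rfl
    · rw [SetLike.mem_coe]
      refine Ideal.mem_span_pair.2 ⟨φ w, 0, ?_⟩
      rw [hφl]
      linear_combination X 1 * hφw
    · rw [SetLike.mem_coe]
      refine Ideal.mem_span_pair.2 ⟨-(X 1 ^ (m - 1) * φ w), φ l₁, ?_⟩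
      rw [hφl]
      linear_combination hφcore - (X 1 ^ (m - 1) * X 1) * hφw + hXm

/-- Theorem 3.14(2), case `D⁺_{2k}`: if `l·n = Y·(X² + Y^{2k−2})` in `ℝ⟦X,Y⟧`
with `l, n` vanishing at the origin, then the complexifications `l̂, n̂` satisfy
`dim_ℂ ℂ⟦X,Y⟧/⟨l̂,n̂⟩ = 2`. -/
theorem stmt6 (k : ℕ) (hk : 2 ≤ k)
    (l n : MvPowerSeries (Fin 2) ℝ)
    (hl : constantCoeff l = 0)
    (hn : constantCoeff n = 0)
    (hln : l * n = X 1 * ((X 0) ^ 2 + (X 1) ^ (2 * k - 2))) :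
    Module.finrank ℂ (MvPowerSeries (Fin 2) ℂ ⧸
      Ideal.span {MvPowerSeries.map (algebraMap ℝ ℂ) l,
                  MvPowerSeries.map (algebraMap ℝ ℂ) n}) = 2 := by
  have hsw : sw l * sw n = 0 := by rw [← sw_mul, hln, sw_X1_mul]
  rcases mul_eq_zero.1 hsw with h | h
  · rw [main_aux k hk l n hn hln (X1_dvd_of_sw_eq_zero l h)]
    exact dim2
  · rw [Set.pair_comm, main_aux k hk n l hl (by rw [mul_comm]; exact hln)
      (X1_dvd_of_sw_eq_zero n h)]
    exact dim2
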